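/- arXiv:1812.01168 — 9 statements merged into one kernel-verified Lean document; each statement's English description precedes it below -/
import Mathlib

section
/- Let A be a commutative ring, and let u : ι → ι → A satisfy u a b = -u b a, (u a b)² = 0, and u a b * u b c + u b c * u c a + u c a * u a b = 0. With Δ a b c := u a b + u b c + u c a, the square move holds: Δ 1 2 3 * Δ 1 3 4 = Δ 2 3 4 * Δ 2 4 1, where 1,2,3,4 are any four indices. -/
theorem square_move
    {A ι : Type*} [CommRing A] (u : ι → ι → A)
    (hanti : ∀ a b, u a b = - u b a)
    (hsq : ∀ a b, (u a b) ^ 2 = 0)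
    (harnold : ∀ a b c, u a b * u b c + u b c * u c a + u c a * u a b = 0)
    (i₁ i₂ i₃ i₄ : ι) :
    (u i₁ i₂ + u i₂ i₃ + u i₃ i₁) * (u i₁ i₃ + u i₃ i₄ + u i₄ i₁)
      = (u i₂ i₃ + u i₃ i₄ + u i₄ i₂) * (u i₂ i₄ + u i₄ i₁ + u i₁ i₂) := by
  have h1 := harnold i₁ i₂ i₃
  have h2 := harnold i₁ i₂ i₄
  have h3 := harnold i₁ i₃ i₄
  have h4 := harnold i₂ i₃ i₄
  simp only [hanti i₃ i₁, hanti i₄ i₁, hanti i₄ i₂] at h1 h2 h3 h4 ⊢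
  linear_combination -h1 + h2 - h3 + h4 - hsq i₁ i₃ + hsq i₂ i₄
end

section
/- Let A be a commutative ℚ-algebra and let u satisfy antisymmetry, square-zero, and the Arnold relation; set Δ a b c := u a b + u b c + u c a. For n ≥ 3 and indices 1,…,n+1, the U(1) decoupling identity holds: (Δ(1,2,n+1) + Δ(2,3,n+1) + ⋯ + Δ(n-1,n,n+1) + Δ(n,1,n+1))^{n-1} = 0. -/
open Finset

/-- A sum of m square-zero commuting elements has vanishing (m+1)-st power. -/
lemma sq_zero_sum_pow {A : Type*} [CommRing A] (t : ℕ → A)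
    (h : ∀ i, t i ^ 2 = 0) : ∀ m, (∑ i ∈ range m, t i) ^ (m + 1) = 0 := by
  intro m
  induction m with
  | zero => simp
  | succ m ih =>
    rw [sum_range_succ, add_pow]
    apply Finset.sum_eq_zero
    intro k hk
    simp only [mem_range] at hk
    rcases le_or_gt k m with hk1 | hk1
    · have h2 : m + 1 + 1 - k = 2 + (m - k) := by omega
      rw [h2, pow_add, h m]
      ring
    · have h2 : k = (m + 1) + (k - (m + 1)) := by omega
      rw [h2, pow_add, ih]
      ring

theorem u1_decoupling
    {A ι : Type*} [CommRing A] [Algebra ℚ A] (u : ι → ι → A)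
    (hanti : ∀ a b, u a b = - u b a)
    (hsq : ∀ a b, (u a b) ^ 2 = 0)
    (harnold : ∀ a b c, u a b * u b c + u b c * u c a + u c a * u a b = 0)
    (n : ℕ) (hn : 3 ≤ n) (a : ℕ → ι) (b : ι) :
    (∑ i ∈ Finset.range n,
        (u (a i) (a ((i + 1) % n)) + u (a ((i + 1) % n)) b + u b (a i))) ^ (n - 1) = 0 := by
  obtain ⟨m, rfl⟩ : ∃ m, n = m + 3 := ⟨n - 3, by omega⟩
  -- Step 1: the b-terms cancel, leaving the polygon.
  have hS : (∑ i ∈ Finset.range (m + 3),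
        (u (a i) (a ((i + 1) % (m + 3))) + u (a ((i + 1) % (m + 3))) b + u b (a i)))
      = ∑ i ∈ range (m + 2), u (a i) (a (i + 1)) + u (a (m + 2)) (a 0) := by
    rw [Finset.sum_add_distrib, Finset.sum_add_distrib]
    have e1 : ∑ i ∈ range (m + 3), u (a i) (a ((i + 1) % (m + 3)))
        = ∑ i ∈ range (m + 2), u (a i) (a (i + 1)) + u (a (m + 2)) (a 0) := by
      rw [Finset.sum_range_succ]
      congr 1
      · refine Finset.sum_congr rfl fun i hi => ?_
        have hi' : i < m + 2 := mem_range.mp hi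
        rw [Nat.mod_eq_of_lt (by omega)]
      · rw [Nat.mod_self]
    have e2 : ∑ i ∈ range (m + 3), u (a ((i + 1) % (m + 3))) b
        = ∑ i ∈ range (m + 3), u (a i) b := by
      conv_rhs => rw [Finset.sum_range_succ']
      rw [Finset.sum_range_succ]
      congr 1
      · refine Finset.sum_congr rfl fun i hi => ?_
        have hi' : i < m + 2 := mem_range.mp hi
        rw [Nat.mod_eq_of_lt (by omega)]
      · rw [Nat.mod_self]
    have e3 : ∑ i ∈ range (m + 3), u b (a i) = - ∑ i ∈ range (m + 3), u (a i) b := by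
      rw [← Finset.sum_neg_distrib]
      exact Finset.sum_congr rfl fun i _ => by rw [hanti]
    rw [e1, e2, e3]; ring
  rw [hS]
  -- Step 2: the polygon is a telescoping sum of triangles.
  have tele : ∀ k, (∑ i ∈ range (k + 2), u (a i) (a (i + 1)) + u (a (k + 2)) (a 0))
      = ∑ i ∈ range (k + 1),
          (u (a 0) (a (i + 1)) + u (a (i + 1)) (a (i + 2)) + u (a (i + 2)) (a 0)) := by
    intro k
    induction k with
    | zero =>
      simp only [Finset.sum_range_succ, Finset.sum_range_zero]
      norm_num
    | succ k ih =>
      rw [Finset.sum_range_succ (n := k + 2)]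
      conv_rhs => rw [Finset.sum_range_succ]
      rw [← ih]
      have h1 : k + 1 + 1 = k + 2 := rfl
      have h2 : k + 1 + 2 = k + 3 := rfl
      have h3 : k + 2 + 1 = k + 3 := rfl
      rw [h1, h2, h3]
      linear_combination - hanti (a (k + 2)) (a 0)
  rw [tele]
  -- Step 3: each triangle is square-zero, so the (m+2)-nd power of m+1 of them vanishes.
  have := sq_zero_sum_pow
    (fun i => u (a 0) (a (i + 1)) + u (a (i + 1)) (a (i + 2)) + u (a (i + 2)) (a 0))
    (fun i => by
      linear_combination hsq (a 0) (a (i + 1)) + hsq (a (i + 1)) (a (i + 2))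
        + hsq (a (i + 2)) (a 0) + 2 * harnold (a 0) (a (i + 1)) (a (i + 2)))
    (m + 1)
  simpa using this
end

section
/- Let A be a commutative ℚ-algebra and let d, e₁, …, eₙ ∈ A satisfy eᵢ² = 0, e₁ + ⋯ + eₙ = -d, and d^{n-1} = 0. Set dᵢ := d + eᵢ. Then for every 0 ≤ j ≤ n-2 one has d₁^j + d₂^j + ⋯ + dₙ^j = (n - j) · d^j. -/
lemma pow_add_sq_zero {A : Type*} [CommRing A] (d x : A) (hx : x ^ 2 = 0) :
    ∀ j : ℕ, 1 ≤ j → (d + x) ^ j = d ^ j + (j : A) * d ^ (j - 1) * x := by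
  intro j hj
  induction j with
  | zero => omega
  | succ k ih =>
    rcases Nat.eq_or_lt_of_le hj with h | h
    · simp [← h]
    · have hk : 1 ≤ k := by omega
      have := ih hk
      have hdk : d ^ (k - 1) * d = d ^ k := by
        conv_rhs => rw [← Nat.sub_add_cancel hk]
        ring
      calc (d + x) ^ (k + 1) = (d + x) ^ k * (d + x) := by ring
        _ = (d ^ k + (k : A) * d ^ (k - 1) * x) * (d + x) := by rw [this]
        _ = d ^ k * d + d ^ k * x + (k : A) * (d ^ (k - 1) * d) * x
              + (k : A) * d ^ (k - 1) * x ^ 2 := by ring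
        _ = d ^ (k + 1) + ((k : A) + 1) * d ^ k * x := by
              rw [hx, hdk]; ring
        _ = d ^ (k + 1) + ((k + 1 : ℕ) : A) * d ^ (k + 1 - 1) * x := by
              push_cast; ring

theorem generalized_u1_decoupling
    {A : Type*} [CommRing A] [Algebra ℚ A] (n : ℕ) (d : A) (e : Fin n → A)
    (hsq : ∀ i, (e i) ^ 2 = 0)
    (hsum : (∑ i, e i) = -d)
    (hd : d ^ (n - 1) = 0) :
    ∀ j, j ≤ n - 2 → (∑ i, (d + e i) ^ j) = ((n - j : ℕ) : A) * d ^ j := by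
  intro j hj
  rcases Nat.eq_zero_or_pos j with rfl | hj1
  · simp
  · have hjn : j ≤ n := by omega
    have hn2 : 2 ≤ n := by omega
    have key : ∀ i, (d + e i) ^ j = d ^ j + (j : A) * d ^ (j - 1) * e i :=
      fun i => pow_add_sq_zero d (e i) (hsq i) j hj1
    rw [Finset.sum_congr rfl (fun i _ => key i), Finset.sum_add_distrib,
      Finset.sum_const, ← Finset.mul_sum, hsum]
    have hdj : d ^ (j - 1) * d = d ^ j := by
      conv_rhs => rw [← Nat.sub_add_cancel hj1]
      ring
    rw [Nat.cast_sub hjn]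
    simp only [Finset.card_univ, Fintype.card_fin, nsmul_eq_mul]
    linear_combination (-(j : A)) * hdj
end

section
/- Let M be an m × (m+2) matrix over a field K whose two-dimensional (right) kernel is spanned by vectors v, w ∈ K^{m+2}. For indices a ≠ b, let M^{(ab)} be the m × m matrix obtained by deleting columns a and b, and suppose p_{ab} := v_a w_b − v_b w_a ≠ 0. Then the ratio det M^{(ab)} / p_{ab} is (up to a consistent sign (−1)^{a+b}) independent of the choice of the pair (a,b): for any two pairs (a,b) and (c,d) with p_{ab}, p_{cd} ≠ 0, (−1)^{a+b} det M^{(ab)} / p_{ab} = (−1)^{c+d} det M^{(cd)} / p_{cd}. -/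
/-- Delete columns `a` and `b` (with `a < b`) from an `m × (m+2)` matrix. -/
def deleteTwoColumns {m : ℕ} {K : Type*} (M : Matrix (Fin m) (Fin (m + 2)) K)
    (a b : Fin (m + 2)) (hab : (a : ℕ) < (b : ℕ)) : Matrix (Fin m) (Fin m) K :=
  M.submatrix id fun i =>
    b.succAbove ((⟨(a : ℕ), hab.trans_le (Nat.lt_succ_iff.mp b.isLt)⟩ : Fin (m + 1)).succAbove i)

set_option linter.unusedSectionVars false

namespace RedDet

open Matrix

variable {m : ℕ} {K : Type*} [Field K]

/-- Stack two extra rows onto an `m × (m+2)` matrix to get a square matrix. -/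
def stackTwo (M : Matrix (Fin m) (Fin (m + 2)) K) (x y : Fin (m + 2) → K) :
    Matrix (Fin (m + 2)) (Fin (m + 2)) K :=
  fun i j => if h : (i : ℕ) < m then M ⟨i, h⟩ j else if (i : ℕ) = m then x j else y j

@[simp] lemma stackTwo_last (M : Matrix (Fin m) (Fin (m + 2)) K) (x y : Fin (m + 2) → K) :
    stackTwo M x y (Fin.last (m + 1)) = y := by
  funext j; simp [stackTwo]

@[simp] lemma stackTwo_cast_last (M : Matrix (Fin m) (Fin (m + 2)) K) (x y : Fin (m + 2) → K) :
    stackTwo M x y (Fin.castSucc (Fin.last m)) = x := by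
  funext j; simp [stackTwo]

@[simp] lemma stackTwo_cast_cast (M : Matrix (Fin m) (Fin (m + 2)) K) (x y : Fin (m + 2) → K)
    (i : Fin m) : stackTwo M x y (Fin.castSucc (Fin.castSucc i)) = M i := by
  funext j; simp [stackTwo]

lemma stackTwo_mulVec (M : Matrix (Fin m) (Fin (m + 2)) K) (x y z : Fin (m + 2) → K)
    (hz : M.mulVec z = 0) :
    (stackTwo M x y).mulVec z =
      Pi.single (Fin.castSucc (Fin.last m)) (x ⬝ᵥ z) + Pi.single (Fin.last (m + 1)) (y ⬝ᵥ z) := by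
  funext i
  induction i using Fin.lastCases with
  | last =>
      simp [Matrix.mulVec, Fin.castSucc_lt_last, (Fin.castSucc_lt_last (Fin.last m)).ne',
        Pi.single_apply, (Fin.castSucc_lt_last (Fin.last m)).ne]
  | cast i =>
      induction i using Fin.lastCases with
      | last =>
          simp [Matrix.mulVec, Pi.single_apply, (Fin.castSucc_lt_last (Fin.last m)).ne]
      | cast i =>
          have h1 : Fin.castSucc (Fin.castSucc i) ≠ Fin.castSucc (Fin.last m) := by
            simp [Fin.ext_iff]; omega
          have h2 : Fin.castSucc (Fin.castSucc i) ≠ Fin.last (m + 1) := by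
            simp [Fin.ext_iff]; omega
          have := congrFun hz i
          simpa [Matrix.mulVec, Pi.single_apply, h1, h2] using this

variable {M : Matrix (Fin m) (Fin (m + 2)) K} {v w : Fin (m + 2) → K}

/-- Key vanishing: if `z` annihilates both kernel vectors, the stacked determinant vanishes. -/
lemma det_stackTwo_eq_zero (hv : M.mulVec v = 0) (hw : M.mulVec w = 0)
    (hind : LinearIndependent K ![v, w]) (z y : Fin (m + 2) → K)
    (hzv : z ⬝ᵥ v = 0) (hzw : z ⬝ᵥ w = 0) : (stackTwo M z y).det = 0 := by
  rw [← Matrix.exists_mulVec_eq_zero_iff]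
  have hAv : (stackTwo M z y).mulVec v = Pi.single (Fin.last (m + 1)) (y ⬝ᵥ v) := by
    rw [stackTwo_mulVec M z y v hv, hzv]; simp
  have hAw : (stackTwo M z y).mulVec w = Pi.single (Fin.last (m + 1)) (y ⬝ᵥ w) := by
    rw [stackTwo_mulVec M z y w hw, hzw]; simp
  by_cases h : y ⬝ᵥ v = 0
  · refine ⟨v, hind.ne_zero 0, ?_⟩
    rw [hAv, h]; simp
  · refine ⟨(y ⬝ᵥ w) • v - (y ⬝ᵥ v) • w, ?_, ?_⟩
    · intro h0
      have := Fintype.linearIndependent_iff.mp hind ![y ⬝ᵥ w, -(y ⬝ᵥ v)] ?_ 1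
      · simp at this; exact h this
      · simpa [Fin.sum_univ_two, sub_eq_add_neg, neg_smul] using h0
    · rw [Matrix.mulVec_sub, Matrix.mulVec_smul, Matrix.mulVec_smul, hAv, hAw]
      funext i; simp [Pi.single_apply, mul_comm]

lemma det_stackTwo_swap (x y : Fin (m + 2) → K) :
    (stackTwo M y x).det = -(stackTwo M x y).det := by
  have : stackTwo M y x =
      (stackTwo M x y).submatrix (Equiv.swap (Fin.castSucc (Fin.last m)) (Fin.last (m + 1))) id := by
    funext i j
    rcases eq_or_ne i (Fin.castSucc (Fin.last m)) with rfl | h1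
    · simp [Equiv.swap_apply_left]
    · rcases eq_or_ne i (Fin.last (m + 1)) with rfl | h2
      · simp [Equiv.swap_apply_right]
      · rw [Matrix.submatrix_apply, Equiv.swap_apply_of_ne_of_ne h1 h2, id]
        have hi : (i : ℕ) < m := by
          have := i.isLt
          simp [Fin.ext_iff] at h1 h2; omega
        simp [stackTwo, hi]
  rw [this, Matrix.det_permute]
  have hne : (Fin.castSucc (Fin.last m)) ≠ Fin.last (m + 1) := (Fin.castSucc_lt_last _).ne
  simp [Equiv.Perm.sign_swap hne]

lemma det_stackTwo_refl (x : Fin (m + 2) → K) : (stackTwo M x x).det = 0 := by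
  apply Matrix.det_zero_of_row_eq (i := Fin.castSucc (Fin.last m)) (j := Fin.last (m + 1))
  · exact (Fin.castSucc_lt_last _).ne
  · simp

lemma updateRow_fst (x x' y : Fin (m + 2) → K) :
    (stackTwo M x y).updateRow (Fin.castSucc (Fin.last m)) x' = stackTwo M x' y := by
  funext i j
  rcases eq_or_ne i (Fin.castSucc (Fin.last m)) with rfl | h
  · simp
  · rw [Matrix.updateRow_ne h]
    simp [Fin.ext_iff] at h
    simp [stackTwo, h]

/-- Linearity of the stacked determinant in the first added row. -/
lemma det_stackTwo_add (x x' y : Fin (m + 2) → K) :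
    (stackTwo M (x + x') y).det = (stackTwo M x y).det + (stackTwo M x' y).det := by
  rw [← updateRow_fst (M := M) x (x + x') y, Matrix.det_updateRow_add,
    updateRow_fst, updateRow_fst]

lemma det_stackTwo_smul (s : K) (x y : Fin (m + 2) → K) :
    (stackTwo M (s • x) y).det = s * (stackTwo M x y).det := by
  rw [← updateRow_fst (M := M) x (s • x) y, Matrix.det_updateRow_smul, updateRow_fst]

/-- Double cofactor expansion: the stacked determinant with unit vectors `e_a, e_b` appended
is the signed minor. -/
lemma det_stackTwo_single (a b : Fin (m + 2)) (hab : (a : ℕ) < (b : ℕ)) :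
    (stackTwo M (Pi.single a 1) (Pi.single b 1)).det
      = -((-1 : K) ^ ((a : ℕ) + (b : ℕ)) * (deleteTwoColumns M a b hab).det) := by
  set A := stackTwo M (Pi.single a 1) (Pi.single b 1) with hA
  have hb1 : (b : ℕ) ≤ m + 1 := Nat.lt_succ_iff.mp b.isLt
  set a' : Fin (m + 1) := ⟨(a : ℕ), hab.trans_le hb1⟩ with ha'
  rw [Matrix.det_succ_row A (Fin.last (m + 1))]
  rw [Finset.sum_eq_single b]
  rotate_left
  · intro j _ hj
    have : A (Fin.last (m + 1)) j = 0 := by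
      simp [hA, stackTwo, Pi.single_apply, hj]
    rw [this]; ring
  · intro h; exact absurd (Finset.mem_univ b) h
  have hAlb : A (Fin.last (m + 1)) b = 1 := by simp [hA, stackTwo, Pi.single_apply]
  rw [hAlb, Fin.succAbove_last]
  set A1 := A.submatrix Fin.castSucc b.succAbove with hA1
  rw [Matrix.det_succ_row A1 (Fin.last m)]
  have hsa : b.succAbove a' = a := by
    rw [Fin.succAbove_of_castSucc_lt]
    · exact Fin.ext rfl
    · rw [Fin.lt_iff_val_lt_val]; exact hab
  rw [Finset.sum_eq_single a']
  rotate_left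
  · intro j _ hj
    have hne : b.succAbove j ≠ a := by
      rw [← hsa]; exact fun h => hj (Fin.succAbove_right_injective h)
    have : A1 (Fin.last m) j = 0 := by
      simp [hA1, hA, stackTwo, Pi.single_apply, hne]
    rw [this]; ring
  · intro h; exact absurd (Finset.mem_univ a') h
  have hA1la : A1 (Fin.last m) a' = 1 := by
    simp [hA1, hA, stackTwo, hsa, Pi.single_apply]
  rw [hA1la, Fin.succAbove_last]
  have hsub : A1.submatrix Fin.castSucc a'.succAbove = deleteTwoColumns M a b hab := by
    funext i j
    have : ((Fin.castSucc (Fin.castSucc i) : Fin (m + 2)) : ℕ) < m := i.isLt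
    simp [hA1, hA, stackTwo, deleteTwoColumns, this, ha']
  rw [hsub]
  have h1 : (Fin.last (m + 1) : ℕ) = m + 1 := rfl
  have h2 : (Fin.last m : ℕ) = m := rfl
  have h3 : (a' : ℕ) = (a : ℕ) := rfl
  rw [h1, h2, h3, mul_one, mul_one]
  rw [← mul_assoc, ← pow_add]
  have h4 : m + 1 + (b : ℕ) + (m + (a : ℕ)) = 2 * m + 1 + ((a : ℕ) + (b : ℕ)) := by ring
  rw [h4, pow_add, pow_add, pow_mul]
  simp

/-- The three-term relation in the first slot. -/
lemma rel_fst (hv : M.mulVec v = 0) (hw : M.mulVec w = 0)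
    (hind : LinearIndependent K ![v, w]) (a b c : Fin (m + 2)) (y : Fin (m + 2) → K) :
    (v a * w b - v b * w a) * (stackTwo M (Pi.single c 1) y).det
      = (v c * w b - v b * w c) * (stackTwo M (Pi.single a 1) y).det
        + (v a * w c - v c * w a) * (stackTwo M (Pi.single b 1) y).det := by
  have hzv : ((v a * w b - v b * w a) • (Pi.single c 1 : Fin (m + 2) → K)
      - (v c * w b - v b * w c) • (Pi.single a 1 : Fin (m + 2) → K)
      - (v a * w c - v c * w a) • (Pi.single b 1 : Fin (m + 2) → K)) ⬝ᵥ v = 0 := by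
    simp only [sub_dotProduct, smul_dotProduct, single_dotProduct,
      smul_eq_mul]
    ring
  have hzw : ((v a * w b - v b * w a) • (Pi.single c 1 : Fin (m + 2) → K)
      - (v c * w b - v b * w c) • (Pi.single a 1 : Fin (m + 2) → K)
      - (v a * w c - v c * w a) • (Pi.single b 1 : Fin (m + 2) → K)) ⬝ᵥ w = 0 := by
    simp only [sub_dotProduct, smul_dotProduct, single_dotProduct,
      smul_eq_mul]
    ring
  have h0 := det_stackTwo_eq_zero hv hw hind _ y hzv hzw
  have hdecomp : (v a * w b - v b * w a) • (Pi.single c 1 : Fin (m + 2) → K)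
      = ((v a * w b - v b * w a) • (Pi.single c 1 : Fin (m + 2) → K)
          - (v c * w b - v b * w c) • (Pi.single a 1 : Fin (m + 2) → K)
          - (v a * w c - v c * w a) • (Pi.single b 1 : Fin (m + 2) → K))
        + ((v c * w b - v b * w c) • (Pi.single a 1 : Fin (m + 2) → K)
          + (v a * w c - v c * w a) • (Pi.single b 1 : Fin (m + 2) → K)) := by
    abel
  have hkey := congrArg Matrix.det (congrArg (fun x => stackTwo M x y) hdecomp)
  simp only [det_stackTwo_add, det_stackTwo_smul, h0, zero_add] at hkey
  linear_combination hkey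

/-- The main proportionality. -/
theorem main (hv : M.mulVec v = 0) (hw : M.mulVec w = 0)
    (hind : LinearIndependent K ![v, w])
    (a b c d : Fin (m + 2))
    (hpab : v a * w b - v b * w a ≠ 0) :
    (v a * w b - v b * w a) * (stackTwo M (Pi.single c 1) (Pi.single d 1)).det
      = (v c * w d - v d * w c) * (stackTwo M (Pi.single a 1) (Pi.single b 1)).det := by
  have rel_snd : ∀ (a b d : Fin (m + 2)) (x : Fin (m + 2) → K),
      (v a * w b - v b * w a) * (stackTwo M x (Pi.single d 1)).det
        = (v d * w b - v b * w d) * (stackTwo M x (Pi.single a 1)).det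
          + (v a * w d - v d * w a) * (stackTwo M x (Pi.single b 1)).det := by
    intro a b d x
    have h := rel_fst hv hw hind a b d x
    have s1 := det_stackTwo_swap (M := M) x (Pi.single d 1)
    have s2 := det_stackTwo_swap (M := M) x (Pi.single a 1)
    have s3 := det_stackTwo_swap (M := M) x (Pi.single b 1)
    linear_combination -h + (v a * w b - v b * w a) * s1 - (v d * w b - v b * w d) * s2
      - (v a * w d - v d * w a) * s3
  have h1 := rel_fst hv hw hind a b c (Pi.single d 1)
  have h2 := rel_snd a b d (Pi.single a 1)
  have h3 := rel_snd a b d (Pi.single b 1)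
  have haa := det_stackTwo_refl (M := M) (Pi.single a 1)
  have hbb := det_stackTwo_refl (M := M) (Pi.single b 1)
  have hba := det_stackTwo_swap (M := M) (Pi.single a 1) (Pi.single b 1)
  have key : (v a * w b - v b * w a) * ((v a * w b - v b * w a) *
        (stackTwo M (Pi.single c 1) (Pi.single d 1)).det)
      = (v a * w b - v b * w a) * ((v c * w d - v d * w c) *
        (stackTwo M (Pi.single a 1) (Pi.single b 1)).det) := by
    linear_combination (v a * w b - v b * w a) * h1 + (v c * w b - v b * w c) * h2
      + (v a * w c - v c * w a) * h3
      + (v c * w b - v b * w c) * (v d * w b - v b * w d) * haa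
      + (v a * w c - v c * w a) * (v a * w d - v d * w a) * hbb
      + (v a * w c - v c * w a) * (v d * w b - v b * w d) * hba
  exact mul_left_cancel₀ hpab key

end RedDet

theorem reduced_determinant_well_defined
    {m : ℕ} {K : Type*} [Field K]
    (M : Matrix (Fin m) (Fin (m + 2)) K) (v w : Fin (m + 2) → K)
    (hv : M.mulVec v = 0) (hw : M.mulVec w = 0)
    (hind : LinearIndependent K ![v, w])
    (hspan : ∀ z, M.mulVec z = 0 → z ∈ Submodule.span K {v, w})
    (a b c d : Fin (m + 2)) (hab : (a : ℕ) < (b : ℕ)) (hcd : (c : ℕ) < (d : ℕ))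
    (hpab : v a * w b - v b * w a ≠ 0) (hpcd : v c * w d - v d * w c ≠ 0) :
    (-1 : K) ^ ((a : ℕ) + (b : ℕ)) * (deleteTwoColumns M a b hab).det
        / (v a * w b - v b * w a)
      = (-1 : K) ^ ((c : ℕ) + (d : ℕ)) * (deleteTwoColumns M c d hcd).det
        / (v c * w d - v d * w c) := by
  have main := RedDet.main hv hw hind a b c d hpab
  rw [RedDet.det_stackTwo_single a b hab, RedDet.det_stackTwo_single c d hcd] at main
  rw [div_eq_div_iff hpab hpcd]
  linear_combination main
end

section
/- Let Λ be the exterior algebra over a field K of characteristic 0 generated by elements θ₁,…,θₙ, χ₁,…,χₙ (all pairwise anticommuting), and let x₁,…,xₙ ∈ K be distinct. Define u_{ab} := (θ_a − θ_b)(χ_a − χ_b)/(x_a − x_b) ∈ Λ ⊗ K. Then: (i) u_{ab} = −u_{ba}; (ii) u_{ab}² = 0; (iii) u_{ab}u_{bc} + u_{bc}u_{ca} + u_{ca}u_{ab} = 0 for all distinct a, b, c. -/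
set_option maxHeartbeats 1000000

open ExteriorAlgebra

section Aux

variable {R M : Type*} [CommRing R] [AddCommGroup M] [Module R M]

private lemma aux_swap (v w : M) :
    ι R v * ι R w = -(ι R w * ι R v) :=
  eq_neg_of_add_eq_zero_left (ExteriorAlgebra.ι_add_mul_swap v w)

private lemma aux_T (v w z : M) :
    ι R (v - w) * ι R (w - z) =
      ι R v * ι R w + ι R w * ι R z + ι R z * ι R v := by
  rw [map_sub, map_sub, sub_mul, mul_sub, mul_sub, ι_sq_zero, aux_swap z v]
  abel

private lemma aux_cross (a b c p q r : M) :
    ι R (a - b) * ι R (p - q) * (ι R (b - c) * ι R (q - r)) =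
      -((ι R a * ι R b + ι R b * ι R c + ι R c * ι R a) *
        (ι R p * ι R q + ι R q * ι R r + ι R r * ι R p)) := by
  calc ι R (a - b) * ι R (p - q) * (ι R (b - c) * ι R (q - r))
      = ι R (a - b) * (ι R (p - q) * ι R (b - c)) * ι R (q - r) := by
        rw [mul_assoc, mul_assoc, mul_assoc]
    _ = ι R (a - b) * (-(ι R (b - c) * ι R (p - q))) * ι R (q - r) := by
        rw [aux_swap]
    _ = -((ι R (a - b) * ι R (b - c)) * (ι R (p - q) * ι R (q - r))) := by
        rw [mul_neg, neg_mul, mul_assoc, mul_assoc, mul_assoc]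
    _ = _ := by rw [aux_T, aux_T]

end Aux

theorem grassmann_realization_relations
    {K : Type*} [Field K] [CharZero K] (n : ℕ) (x : Fin n → K)
    (hx : Function.Injective x) :
    let θ : Fin n → ExteriorAlgebra K ((Fin n ⊕ Fin n) → K) :=
      fun i => ExteriorAlgebra.ι K (Pi.single (Sum.inl i) (1 : K))
    let χ : Fin n → ExteriorAlgebra K ((Fin n ⊕ Fin n) → K) :=
      fun i => ExteriorAlgebra.ι K (Pi.single (Sum.inr i) (1 : K))
    let u : Fin n → Fin n → ExteriorAlgebra K ((Fin n ⊕ Fin n) → K) :=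
      fun a b => (x a - x b)⁻¹ • ((θ a - θ b) * (χ a - χ b))
    (∀ a b, u a b = - u b a) ∧
    (∀ a b, (u a b) ^ 2 = 0) ∧
    (∀ a b c, a ≠ b → b ≠ c → c ≠ a →
      u a b * u b c + u b c * u c a + u c a * u a b = 0) := by
  intro θ χ u
  set ta : Fin n → (Fin n ⊕ Fin n) → K := fun i => Pi.single (Sum.inl i) (1 : K) with hta
  set sa : Fin n → (Fin n ⊕ Fin n) → K := fun i => Pi.single (Sum.inr i) (1 : K) with hsa
  have hθ : ∀ a b : Fin n, θ a - θ b = ι K (ta a - ta b) := fun a b => (map_sub _ _ _).symm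
  have hχ : ∀ a b : Fin n, χ a - χ b = ι K (sa a - sa b) := fun a b => (map_sub _ _ _).symm
  refine ⟨?_, ?_, ?_⟩
  · intro a b
    show (x a - x b)⁻¹ • ((θ a - θ b) * (χ a - χ b)) =
      -((x b - x a)⁻¹ • ((θ b - θ a) * (χ b - χ a)))
    have h1 : θ b - θ a = -(θ a - θ b) := (neg_sub _ _).symm
    have h2 : χ b - χ a = -(χ a - χ b) := (neg_sub _ _).symm
    rw [h1, h2, neg_mul_neg, ← neg_smul, ← inv_neg, neg_sub]
  · intro a b
    show ((x a - x b)⁻¹ • ((θ a - θ b) * (χ a - χ b))) ^ 2 = 0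
    rw [hθ, hχ, smul_pow]
    have h2 : (ι K (ta a - ta b) * ι K (sa a - sa b)) ^ 2 = 0 := by
      rw [sq, ← mul_assoc, mul_assoc (ι K (ta a - ta b)), aux_swap (sa a - sa b),
        mul_neg, ← mul_assoc, ι_sq_zero, zero_mul, neg_zero, zero_mul]
    rw [h2, smul_zero]
  · intro a b c hab hbc hca
    show (x a - x b)⁻¹ • ((θ a - θ b) * (χ a - χ b)) *
        ((x b - x c)⁻¹ • ((θ b - θ c) * (χ b - χ c))) +
      (x b - x c)⁻¹ • ((θ b - θ c) * (χ b - χ c)) *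
        ((x c - x a)⁻¹ • ((θ c - θ a) * (χ c - χ a))) +
      (x c - x a)⁻¹ • ((θ c - θ a) * (χ c - χ a)) *
        ((x a - x b)⁻¹ • ((θ a - θ b) * (χ a - χ b))) = 0
    have dab : x a - x b ≠ 0 := sub_ne_zero_of_ne (fun h => hab (hx h))
    have dbc : x b - x c ≠ 0 := sub_ne_zero_of_ne (fun h => hbc (hx h))
    have dca : x c - x a ≠ 0 := sub_ne_zero_of_ne (fun h => hca (hx h))
    simp only [hθ, hχ]
    rw [smul_mul_smul_comm, smul_mul_smul_comm, smul_mul_smul_comm,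
      aux_cross (ta a) (ta b) (ta c) (sa a) (sa b) (sa c),
      aux_cross (ta b) (ta c) (ta a) (sa b) (sa c) (sa a),
      aux_cross (ta c) (ta a) (ta b) (sa c) (sa a) (sa b)]
    have eθ2 : ι K (ta b) * ι K (ta c) + ι K (ta c) * ι K (ta a) + ι K (ta a) * ι K (ta b) =
        ι K (ta a) * ι K (ta b) + ι K (ta b) * ι K (ta c) + ι K (ta c) * ι K (ta a) := by abel
    have eθ3 : ι K (ta c) * ι K (ta a) + ι K (ta a) * ι K (ta b) + ι K (ta b) * ι K (ta c) =
        ι K (ta a) * ι K (ta b) + ι K (ta b) * ι K (ta c) + ι K (ta c) * ι K (ta a) := by abel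
    have eχ2 : ι K (sa b) * ι K (sa c) + ι K (sa c) * ι K (sa a) + ι K (sa a) * ι K (sa b) =
        ι K (sa a) * ι K (sa b) + ι K (sa b) * ι K (sa c) + ι K (sa c) * ι K (sa a) := by abel
    have eχ3 : ι K (sa c) * ι K (sa a) + ι K (sa a) * ι K (sa b) + ι K (sa b) * ι K (sa c) =
        ι K (sa a) * ι K (sa b) + ι K (sa b) * ι K (sa c) + ι K (sa c) * ι K (sa a) := by abel
    rw [eθ2, eθ3, eχ2, eχ3, smul_neg, smul_neg, smul_neg, ← neg_add, ← neg_add,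
      ← add_smul, ← add_smul]
    have hscal : (x a - x b)⁻¹ * (x b - x c)⁻¹ + (x b - x c)⁻¹ * (x c - x a)⁻¹ +
        (x c - x a)⁻¹ * (x a - x b)⁻¹ = 0 := by
      field_simp
      ring
    rw [hscal, zero_smul, neg_zero]
end

section
/- Let Λ be the exterior algebra over a field K of characteristic 0 generated by θ₁,…,θₙ, χ₁,…,χₙ, and x₁,…,xₙ ∈ K distinct. Define Δ_{abc} := −(θ_a x_{bc} + θ_b x_{ca} + θ_c x_{ab})(χ_a x_{bc} + χ_b x_{ca} + χ_c x_{ab}) / (x_{ab} x_{bc} x_{ca}) with x_{ab} := x_a − x_b. Then Δ_{abc} = u_{ab} + u_{bc} + u_{ca}, where u_{ab} := (θ_a − θ_b)(χ_a − χ_b)/x_{ab}. -/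
set_option maxHeartbeats 1000000 in
theorem grassmann_aux {K R : Type*} [Field K] [Ring R] [Algebra K R]
    (A B : K) (hA : A ≠ 0) (hB : B ≠ 0) (hAB : A + B ≠ 0)
    (t1 t2 t3 c1 c2 c3 : R) :
    (-((A * B * (-A - B))⁻¹)) •
        ((B • t1 + (-A - B) • t2 + A • t3) * (B • c1 + (-A - B) • c2 + A • c3))
      = A⁻¹ • ((t1 - t2) * (c1 - c2)) + B⁻¹ • ((t2 - t3) * (c2 - c3))
        + (-A - B)⁻¹ • ((t3 - t1) * (c3 - c1)) := by
  have hC : -A - B ≠ 0 := fun h => hAB (by linear_combination -h)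
  have hD : -(A ^ 3 * B ^ 6) - A ^ 4 * B ^ 5 * 3 + (-(A ^ 5 * B ^ 4 * 3) - A ^ 6 * B ^ 3) ≠ 0 := by
    have h : -(A ^ 3 * B ^ 6) - A ^ 4 * B ^ 5 * 3 + (-(A ^ 5 * B ^ 4 * 3) - A ^ 6 * B ^ 3)
        = -((A * B * (A + B)) ^ 3) := by ring
    rw [h]
    exact neg_ne_zero.mpr (pow_ne_zero _ (mul_ne_zero (mul_ne_zero hA hB) hAB))
  simp only [mul_inv]
  simp only [mul_add, add_mul, sub_mul, mul_sub, smul_mul_assoc, mul_smul_comm,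
    smul_smul, smul_add, smul_sub, neg_smul, smul_neg]
  match_scalars
  all_goals field_simp
  all_goals try ring1
  all_goals try linear_combination (A + B) * mul_inv_cancel₀ hD
  all_goals refine Or.inl ?_
  all_goals first | trivial | ring

theorem grassmann_triangle_decomposition
    {K : Type*} [Field K] [CharZero K] (n : ℕ) (x : Fin n → K)
    (hx : Function.Injective x) (a b c : Fin n)
    (hab : a ≠ b) (hbc : b ≠ c) (hca : c ≠ a) :
    let θ : Fin n → ExteriorAlgebra K ((Fin n ⊕ Fin n) → K) :=
      fun i => ExteriorAlgebra.ι K (Pi.single (Sum.inl i) (1 : K))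
    let χ : Fin n → ExteriorAlgebra K ((Fin n ⊕ Fin n) → K) :=
      fun i => ExteriorAlgebra.ι K (Pi.single (Sum.inr i) (1 : K))
    let u : Fin n → Fin n → ExteriorAlgebra K ((Fin n ⊕ Fin n) → K) :=
      fun p q => (x p - x q)⁻¹ • ((θ p - θ q) * (χ p - χ q))
    (-(((x a - x b) * (x b - x c) * (x c - x a))⁻¹)) •
        (((x b - x c) • θ a + (x c - x a) • θ b + (x a - x b) • θ c) *
          ((x b - x c) • χ a + (x c - x a) • χ b + (x a - x b) • χ c))
      = u a b + u b c + u c a := by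
  intro θ χ u
  have hA : x a - x b ≠ 0 := sub_ne_zero.mpr fun h => hab (hx h)
  have hB : x b - x c ≠ 0 := sub_ne_zero.mpr fun h => hbc (hx h)
  have hAB : (x a - x b) + (x b - x c) ≠ 0 := by
    have h : (x a - x b) + (x b - x c) = x a - x c := by ring
    rw [h]
    exact sub_ne_zero.mpr fun h' => hca (hx h'.symm)
  have hC : x c - x a = -(x a - x b) - (x b - x c) := by ring
  simp only [u]
  rw [hC]
  exact grassmann_aux _ _ hA hB hAB _ _ _ _ _ _
end

section
/- Let A be a commutative ℚ-algebra and let Δ₁, …, Δₙ₋₂, Δ'₁, …, Δ'ₘ ∈ A be square-zero elements such that Δ₁ + ⋯ + Δₙ₋₂ = Δ'₁ + ⋯ + Δ'ₘ with m ≤ n − 3. Then Δ₁ Δ₂ ⋯ Δₙ₋₂ = 0. -/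
private lemma sq_zero_add_pow {A : Type*} [CommRing A] {a : A} (ha : a ^ 2 = 0) (b : A) :
    ∀ n : ℕ, (a + b) ^ (n + 1) = b ^ (n + 1) + (n + 1) • (a * b ^ n)
  | 0 => by ring
  | n + 1 => by
    have ih := sq_zero_add_pow ha b n
    have h2 : (a + b) ^ (n + 2) = (a + b) * (a + b) ^ (n + 1) := by ring
    have ha' : a * a = 0 := by rw [← sq]; exact ha
    rw [h2, ih]
    simp only [nsmul_eq_mul]
    push_cast
    ring_nf
    rw [ha]
    ring

private lemma mul_prod_sq_zero {A : Type*} [CommRing A] {ι : Type*} [DecidableEq ι]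
    {s : Finset ι} {x : ι → A} (h : ∀ i ∈ s, x i ^ 2 = 0) {j : ι} (hj : j ∈ s) :
    x j * ∏ i ∈ s, x i = 0 := by
  rw [← Finset.mul_prod_erase s x hj, ← mul_assoc, ← sq, h j hj, zero_mul]

private lemma sum_sq_zero_pow {A : Type*} [CommRing A] {ι : Type*} [DecidableEq ι]
    (s : Finset ι) (x : ι → A) (h : ∀ i ∈ s, x i ^ 2 = 0) :
    (∑ i ∈ s, x i) ^ s.card = (Nat.factorial s.card) • ∏ i ∈ s, x i := by
  induction s using Finset.induction_on with
  | empty => simp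
  | @insert a s ha ih =>
    have hs : ∀ i ∈ s, x i ^ 2 = 0 := fun i hi => h i (Finset.mem_insert_of_mem hi)
    have hxa : x a ^ 2 = 0 := h a (Finset.mem_insert_self a s)
    set S := ∑ i ∈ s, x i with hS
    set c := s.card with hc
    have hSc : S ^ c = (Nat.factorial c) • ∏ i ∈ s, x i := ih hs
    have hScc : S * S ^ c = 0 := by
      rw [hSc, mul_smul_comm, hS, Finset.sum_mul,
        Finset.sum_congr rfl (fun j hj => mul_prod_sq_zero hs hj)]
      simp
    have hS1 : S ^ (c + 1) = 0 := by rw [pow_succ, mul_comm]; exact hScc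
    rw [Finset.sum_insert ha, Finset.prod_insert ha, Finset.card_insert_of_notMem ha,
      sq_zero_add_pow hxa S c, hS1, hSc, zero_add, mul_smul_comm, smul_smul,
      Nat.factorial_succ]

private lemma sum_sq_zero_pow_zero {A : Type*} [CommRing A] {ι : Type*} [DecidableEq ι]
    (s : Finset ι) (x : ι → A) (h : ∀ i ∈ s, x i ^ 2 = 0) {p : ℕ} (hp : s.card < p) :
    (∑ i ∈ s, x i) ^ p = 0 := by
  have hS1 : (∑ i ∈ s, x i) ^ (s.card + 1) = 0 := by
    have hzero : ∑ j ∈ s, (∏ i ∈ s, x i) * x j = 0 :=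
      Finset.sum_eq_zero (fun j hj => by rw [mul_comm]; exact mul_prod_sq_zero h hj)
    rw [pow_succ, sum_sq_zero_pow s x h, smul_mul_assoc, Finset.mul_sum, hzero, smul_zero]
  calc (∑ i ∈ s, x i) ^ p
      = (∑ i ∈ s, x i) ^ (s.card + 1) * (∑ i ∈ s, x i) ^ (p - s.card - 1) := by
        rw [← pow_add]; congr 1; omega
    _ = 0 := by rw [hS1, zero_mul]

theorem vanishing_criterion
    {A : Type*} [CommRing A] [Algebra ℚ A] (n m : ℕ) (hn : 3 ≤ n)
    (hm : m ≤ n - 3)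
    (Δ : Fin (n - 2) → A) (Δ' : Fin m → A)
    (hΔ : ∀ i, (Δ i) ^ 2 = 0) (hΔ' : ∀ j, (Δ' j) ^ 2 = 0)
    (hsum : (∑ i, Δ i) = ∑ j, Δ' j) :
    (∏ i, Δ i) = 0 := by
  have hcard : (Finset.univ : Finset (Fin (n - 2))).card = n - 2 := by simp
  have h1 : (∑ i, Δ i) ^ (n - 2) = (Nat.factorial (n - 2)) • ∏ i, Δ i := by
    have := sum_sq_zero_pow Finset.univ Δ (fun i _ => hΔ i)
    rwa [hcard] at this
  have h2 : (∑ j, Δ' j) ^ (n - 2) = 0 := by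
    apply sum_sq_zero_pow_zero _ _ (fun j _ => hΔ' j)
    simp only [Finset.card_univ, Fintype.card_fin]
    omega
  have h3 : (Nat.factorial (n - 2)) • ∏ i, Δ i = 0 := by rw [← h1, hsum, h2]
  have h4 : ((Nat.factorial (n - 2) : ℚ)) • ∏ i, Δ i = 0 := by
    rw [Nat.cast_smul_eq_nsmul]; exact h3
  rcases smul_eq_zero.mp h4 with h | h
  · exact absurd h (by exact_mod_cast (Nat.factorial_ne_zero (n - 2)))
  · exact h
end

section
/- Let A be a commutative ℚ-algebra and u : ι → ι → A satisfy antisymmetry, square-zero, and the Arnold relation; set Δ a b c := u a b + u b c + u c a. Then for six indices 1,…,6: Δ 1 2 3 · Δ 3 4 5 · Δ 5 6 1 · Δ 6 4 2 = Δ 2 3 4 · Δ 3 4 5 · Δ 5 6 1 · Δ 6 4 2 + Δ 1 2 3 · Δ 2 3 4 · Δ 5 6 1 · Δ 6 4 2 + Δ 1 2 3 · Δ 3 4 5 · Δ 2 3 4 · Δ 6 4 2 + Δ 1 2 3 · Δ 3 4 5 · Δ 5 6 1 · Δ 2 3 4. -/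
/-- Sum of three commuting square-zero elements has vanishing fourth power. -/
lemma aux_cube_zero {A : Type*} [CommRing A] (x y z : A)
    (hx : x ^ 2 = 0) (hy : y ^ 2 = 0) (hz : z ^ 2 = 0) :
    (x + y + z) ^ 4 = 0 := by
  linear_combination (6*z^2 + 12*y*z + 6*y^2 + 4*x*z + 4*x*y + x^2) * hx
    + (6*z^2 + 4*y*z + y^2 + 12*x*z + 4*x*y) * hy + (z^2 + 4*y*z + 4*x*z + 12*x*y) * hz

theorem octahedral_decomposition_identity
    {A ι : Type*} [CommRing A] [Algebra ℚ A] (u : ι → ι → A)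
    (hanti : ∀ a b, u a b = - u b a)
    (hsq : ∀ a b, (u a b) ^ 2 = 0)
    (harnold : ∀ a b c, u a b * u b c + u b c * u c a + u c a * u a b = 0)
    (i₁ i₂ i₃ i₄ i₅ i₆ : ι) :
    letI Δ : ι → ι → ι → A := fun a b c => u a b + u b c + u c a
    Δ i₁ i₂ i₃ * Δ i₃ i₄ i₅ * Δ i₅ i₆ i₁ * Δ i₆ i₄ i₂
      = Δ i₂ i₃ i₄ * Δ i₃ i₄ i₅ * Δ i₅ i₆ i₁ * Δ i₆ i₄ i₂
        + Δ i₁ i₂ i₃ * Δ i₂ i₃ i₄ * Δ i₅ i₆ i₁ * Δ i₆ i₄ i₂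
        + Δ i₁ i₂ i₃ * Δ i₃ i₄ i₅ * Δ i₂ i₃ i₄ * Δ i₆ i₄ i₂
        + Δ i₁ i₂ i₃ * Δ i₃ i₄ i₅ * Δ i₅ i₆ i₁ * Δ i₂ i₃ i₄ := by
  have hΔsq : ∀ a b c : ι, (u a b + u b c + u c a) ^ 2 = 0 := fun a b c => by
    linear_combination hsq a b + hsq b c + hsq c a + 2 * harnold a b c
  beta_reduce
  set a := u i₁ i₂ + u i₂ i₃ + u i₃ i₁ with ha'
  set b := u i₃ i₄ + u i₄ i₅ + u i₅ i₃ with hb'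
  set c := u i₅ i₆ + u i₆ i₁ + u i₁ i₅ with hc'
  set d := u i₆ i₄ + u i₄ i₂ + u i₂ i₆ with hd'
  set e := u i₂ i₃ + u i₃ i₄ + u i₄ i₂ with he'
  have ha : a ^ 2 = 0 := hΔsq _ _ _
  have hb : b ^ 2 = 0 := hΔsq _ _ _
  have hc : c ^ 2 = 0 := hΔsq _ _ _
  have hd : d ^ 2 = 0 := hΔsq _ _ _
  have he : e ^ 2 = 0 := hΔsq _ _ _
  have hS : a + b + c + d - e = (u i₄ i₅ + u i₅ i₆ + u i₆ i₄) + (u i₆ i₁ + u i₁ i₂ + u i₂ i₆)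
      + (u i₁ i₅ + u i₅ i₃ + u i₃ i₁) := by
    rw [ha', hb', hc', hd', he']; ring
  have hS4 : (a + b + c + d - e) ^ 4 = 0 := by
    rw [hS]; exact aux_cube_zero _ _ _ (hΔsq _ _ _) (hΔsq _ _ _) (hΔsq _ _ _)
  have key : (24 : A) * (a * b * c * d)
      = (24 : A) * (e * b * c * d + a * e * c * d + a * b * e * d + a * b * c * e) := by
    linear_combination hS4
      - (6*e^2 - 12*d*e + 6*d^2 - 12*c*e + 12*c*d + 6*c^2 - 12*b*e + 12*b*d + 12*b*c
          + 6*b^2 - 4*a*e + 4*a*d + 4*a*c + 4*a*b + a^2) * ha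
      - (6*e^2 - 12*d*e + 6*d^2 - 12*c*e + 12*c*d + 6*c^2 - 4*b*e + 4*b*d + 4*b*c
          + b^2 - 12*a*e + 12*a*d + 12*a*c + 4*a*b) * hb
      - (6*e^2 - 12*d*e + 6*d^2 - 4*c*e + 4*c*d + c^2 - 12*b*e + 12*b*d + 4*b*c
          - 12*a*e + 12*a*d + 4*a*c + 12*a*b) * hc
      - (6*e^2 - 4*d*e + d^2 - 12*c*e + 4*c*d - 12*b*e + 4*b*d + 12*b*c
          - 12*a*e + 4*a*d + 12*a*c + 12*a*b) * hd
      - (e^2 - 4*d*e - 4*c*e + 12*c*d - 4*b*e + 12*b*d + 12*b*c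
          - 4*a*e + 12*a*d + 12*a*c + 12*a*b) * he
  have h24 : ((24 : ℚ) • (a * b * c * d) : A)
      = (24 : ℚ) • (e * b * c * d + a * e * c * d + a * b * e * d + a * b * c * e) := by
    rw [Algebra.smul_def, Algebra.smul_def, map_ofNat]
    exact key
  exact smul_right_injective A (by norm_num : (24 : ℚ) ≠ 0) h24
end

section
/- Let A be a commutative ring, u antisymmetric with values in A, and Δ a b c := u a b + u b c + u c a. For even n = 2m ≥ 4, the bipyramid linear identity holds: Σ_{i=1}^{m} Δ(2i−1, 2i, n−1) + Σ_{i=1}^{m} Δ(2i+1, 2i, n) = Σ_{i=1}^{m} Δ(2i+1, 2i, n−1) + Σ_{i=1}^{m} Δ(2i−1, 2i, n), where indices in the first two arguments are taken modulo n−2 in the range 1,…,n−2. -/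
theorem bipyramid_linear_identity
    {A ι : Type*} [CommRing A] (m : ℕ) (hm : 2 ≤ m)
    (u : ι → ι → A) (hanti : ∀ a b, u a b = - u b a)
    (lab : ZMod (2 * m - 2) → ι) (p q : ι) :
    letI Δ : ι → ι → ι → A := fun a b c => u a b + u b c + u c a
    (∑ i ∈ Finset.range (m - 1), Δ (lab (2 * i + 1)) (lab (2 * i + 2)) p)
      + (∑ i ∈ Finset.range (m - 1), Δ (lab (2 * i + 3)) (lab (2 * i + 2)) q)
    = (∑ i ∈ Finset.range (m - 1), Δ (lab (2 * i + 3)) (lab (2 * i + 2)) p)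
      + (∑ i ∈ Finset.range (m - 1), Δ (lab (2 * i + 1)) (lab (2 * i + 2)) q) := by
  beta_reduce
  have hzero : ((2 * (m - 1) : ℕ) : ZMod (2 * m - 2)) = 0 := by
    rw [show 2 * (m - 1) = 2 * m - 2 by omega]
    exact ZMod.natCast_self _
  have key : ∀ r : ι,
      ∑ i ∈ Finset.range (m - 1), u r (lab (2 * i + 1))
        = ∑ i ∈ Finset.range (m - 1), u r (lab (2 * i + 3)) := by
    intro r
    have h := Finset.sum_range_sub' (f := fun i : ℕ => u r (lab (2 * (i : ZMod (2 * m - 2)) + 1)))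
      (m - 1)
    have hcast : ∀ i : ℕ, ((2 * (i + 1) : ZMod (2 * m - 2)) + 1) = (2 * i + 3) := by
      intro i; ring
    have hend : ((2 * ((m - 1 : ℕ) : ZMod (2 * m - 2))) + 1) = (2 * (0 : ℕ) + 1) := by
      push_cast
      rw [show ((2 : ZMod (2 * m - 2)) * (m - 1 : ℕ)) = ((2 * (m - 1) : ℕ) : ZMod (2 * m - 2))
        by push_cast; ring, hzero]
      simp
    simp only [Nat.cast_add, Nat.cast_one, hcast] at h
    rw [hend] at h
    rw [Finset.sum_sub_distrib, sub_self] at h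
    linear_combination h

  simp only [Finset.sum_add_distrib]
  linear_combination key p - key q
end
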